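/- Let χ₀ > 0, ε > 0, and let Ĉ, Ŝ : [0,∞) → ℝ be continuous functions such that p ↦ (1 + p)·|Ĉ(ω_ε(p))| and p ↦ (1 + p)·|Ŝ(ω_ε(p))| are integrable on [√ε, ∞), where ω_ε(p) = √(p² + ε²χ₀). Then the function 𝒰(φ,T) = (1/π) ∫_{√ε}^∞ (p/ω_ε(p)) [cos(pφ − χ₀T/(2p)) Ĉ(ω_ε(p)) + sin(pφ − χ₀T/(2p)) Ŝ(ω_ε(p))] dp is well defined, has continuous mixed partial derivative ∂_φ∂_T 𝒰, and satisfies the linearized short-pulse equation 2 ∂_φ ∂_T 𝒰(φ,T) = χ₀ 𝒰(φ,T) for all (φ,T). -/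

import Mathlib

open MeasureTheory Set

noncomputable section

/-- The dispersion relation `ω_ε(p) = √(p² + ε²χ₀)`. -/
def omg (χ₀ ε p : ℝ) : ℝ := Real.sqrt (p ^ 2 + ε ^ 2 * χ₀)

set_option maxHeartbeats 4000000 in
/-- Lemma (the truncated oscillatory integral solves the linearized short-pulse
equation): under the stated integrability assumptions on `Chat, Shat`, the function
`𝒰(φ,T) = (1/π) ∫_{√ε}^∞ (p/ω_ε(p)) [cos(pφ − χ₀T/(2p)) Chat(ω_ε(p))
+ sin(pφ − χ₀T/(2p)) Shat(ω_ε(p))] dp` is well defined, has continuous mixed partial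
derivative `∂_φ∂_T 𝒰`, and satisfies `2 ∂_φ ∂_T 𝒰 = χ₀ 𝒰` everywhere. -/
theorem statement16 (χ₀ ε : ℝ) (hχ₀ : 0 < χ₀) (hε : 0 < ε)
    (Chat Shat : ℝ → ℝ) (hChat : Continuous Chat) (hShat : Continuous Shat)
    (hintC : IntegrableOn (fun p : ℝ => (1 + p) * |Chat (omg χ₀ ε p)|)
      (Ici (Real.sqrt ε)))
    (hintS : IntegrableOn (fun p : ℝ => (1 + p) * |Shat (omg χ₀ ε p)|)
      (Ici (Real.sqrt ε))) :
    ∀ U : ℝ → ℝ → ℝ,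
      (∀ φ T : ℝ, U φ T = (1 / Real.pi) *
        ∫ p in Ioi (Real.sqrt ε), (p / omg χ₀ ε p) *
          (Real.cos (p * φ - χ₀ * T / (2 * p)) * Chat (omg χ₀ ε p)
            + Real.sin (p * φ - χ₀ * T / (2 * p)) * Shat (omg χ₀ ε p))) →
      -- the defining integrand is integrable (the integral is well defined)
      (∀ φ T : ℝ, IntegrableOn (fun p : ℝ => (p / omg χ₀ ε p) *
          (Real.cos (p * φ - χ₀ * T / (2 * p)) * Chat (omg χ₀ ε p)
            + Real.sin (p * φ - χ₀ * T / (2 * p)) * Shat (omg χ₀ ε p)))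
          (Ioi (Real.sqrt ε))) ∧
      -- the inner (T-) derivative exists
      (∀ φ T : ℝ, DifferentiableAt ℝ (fun T' : ℝ => U φ T') T) ∧
      -- the mixed partial derivative exists
      (∀ T φ : ℝ, DifferentiableAt ℝ (fun φ' : ℝ => deriv (fun T' : ℝ => U φ' T') T) φ) ∧
      -- and is continuous as a function of (φ, T)
      Continuous (fun q : ℝ × ℝ =>
        deriv (fun φ' : ℝ => deriv (fun T' : ℝ => U φ' T') q.2) q.1) ∧
      -- the linearized short-pulse equation holds
      (∀ φ T : ℝ,
        2 * deriv (fun φ' : ℝ => deriv (fun T' : ℝ => U φ' T') T) φ = χ₀ * U φ T) := by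
  intro U hU
  set a := Real.sqrt ε with ha
  have ha_pos : 0 < a := Real.sqrt_pos.2 hε
  set ω : ℝ → ℝ := fun p => omg χ₀ ε p with hωdef
  have hω_pos : ∀ p, 0 < ω p := fun p => Real.sqrt_pos.2 (by positivity)
  have hω_cont : Continuous ω := by
    simp only [hωdef, omg]
    fun_prop
  set c := Real.sqrt (ε ^ 2 * χ₀) with hc
  have hc_pos : 0 < c := Real.sqrt_pos.2 (by positivity)
  have hωc : ∀ p, c ≤ ω p := fun p => Real.sqrt_le_sqrt (by nlinarith [sq_nonneg p])
  have hpω : ∀ p, 0 ≤ p → p ≤ ω p := by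
    intro p hp
    have : p = Real.sqrt (p ^ 2) := by rw [Real.sqrt_sq hp]
    rw [this]
    exact Real.sqrt_le_sqrt (by nlinarith)
  -- notations
  set f : ℝ → ℝ → ℝ → ℝ := fun p φ T => (p / ω p) *
    (Real.cos (p * φ - χ₀ * T / (2 * p)) * Chat (ω p)
      + Real.sin (p * φ - χ₀ * T / (2 * p)) * Shat (ω p)) with hf
  set g : ℝ → ℝ → ℝ → ℝ := fun p φ T => (χ₀ / (2 * ω p)) *
    (Real.sin (p * φ - χ₀ * T / (2 * p)) * Chat (ω p)
      - Real.cos (p * φ - χ₀ * T / (2 * p)) * Shat (ω p)) with hg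
  set B : ℝ → ℝ := fun p => (1 + p) * (|Chat (ω p)| + |Shat (ω p)|) with hB
  have hB_int : IntegrableOn B (Ioi a) := by
    have : B = fun p => (1 + p) * |Chat (ω p)| + (1 + p) * |Shat (ω p)| := by
      funext p; simp only [hB]; ring
    rw [this]
    exact (hintC.mono_set Ioi_subset_Ici_self).add (hintS.mono_set Ioi_subset_Ici_self)
  have hB_nonneg : ∀ p ∈ Ioi a, 0 ≤ B p := by
    intro p hp
    have hp0 : (0:ℝ) < p := lt_trans ha_pos hp
    simp only [hB]
    positivity
  -- trig bounds
  have htrig1 : ∀ x C S : ℝ, |Real.cos x * C + Real.sin x * S| ≤ |C| + |S| := by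
    intro x C S
    calc |Real.cos x * C + Real.sin x * S| ≤ |Real.cos x * C| + |Real.sin x * S| := abs_add_le _ _
    _ ≤ |C| + |S| := by
        rw [abs_mul, abs_mul]
        have h1 := Real.abs_cos_le_one x
        have h2 := Real.abs_sin_le_one x
        have := abs_nonneg C; have := abs_nonneg S
        nlinarith
  have htrig2 : ∀ x C S : ℝ, |Real.sin x * C - Real.cos x * S| ≤ |C| + |S| := by
    intro x C S
    calc |Real.sin x * C - Real.cos x * S| ≤ |Real.sin x * C| + |Real.cos x * S| := abs_sub _ _
    _ ≤ |C| + |S| := by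
        rw [abs_mul, abs_mul]
        have h1 := Real.abs_cos_le_one x
        have h2 := Real.abs_sin_le_one x
        have := abs_nonneg C; have := abs_nonneg S
        nlinarith
  -- bounds
  have hfB : ∀ p ∈ Ioi a, ∀ φ T : ℝ, |f p φ T| ≤ B p := by
    intro p hp φ T
    have hp0 : (0:ℝ) < p := lt_trans ha_pos hp
    have h1 : p / ω p ≤ 1 := (div_le_one (hω_pos p)).2 (hpω p hp0.le)
    have h1' : 0 ≤ p / ω p := div_nonneg hp0.le (hω_pos p).le
    calc |f p φ T| = (p / ω p) * |Real.cos (p * φ - χ₀ * T / (2 * p)) * Chat (ω p)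
          + Real.sin (p * φ - χ₀ * T / (2 * p)) * Shat (ω p)| := by
          rw [hf]; rw [abs_mul, abs_of_nonneg h1']
    _ ≤ 1 * (|Chat (ω p)| + |Shat (ω p)|) := by
        apply mul_le_mul h1 (htrig1 _ _ _) (abs_nonneg _) zero_le_one
    _ ≤ (1 + p) * (|Chat (ω p)| + |Shat (ω p)|) := by
        apply mul_le_mul_of_nonneg_right (by linarith) (by positivity)
  have hgB : ∀ p ∈ Ioi a, ∀ φ T : ℝ, |g p φ T| ≤ (χ₀ / (2 * c)) * B p := by
    intro p hp φ T
    have hp0 : (0:ℝ) < p := lt_trans ha_pos hp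
    have h1 : χ₀ / (2 * ω p) ≤ χ₀ / (2 * c) := by
      apply div_le_div_of_nonneg_left hχ₀.le (by linarith [hc_pos]) (by linarith [hωc p])
    have h1' : 0 ≤ χ₀ / (2 * ω p) := div_nonneg hχ₀.le (by linarith [hω_pos p])
    calc |g p φ T| = (χ₀ / (2 * ω p)) * |Real.sin (p * φ - χ₀ * T / (2 * p)) * Chat (ω p)
          - Real.cos (p * φ - χ₀ * T / (2 * p)) * Shat (ω p)| := by
          rw [hg]; rw [abs_mul, abs_of_nonneg h1']
    _ ≤ (χ₀ / (2 * c)) * (|Chat (ω p)| + |Shat (ω p)|) := by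
        apply mul_le_mul h1 (htrig2 _ _ _) (abs_nonneg _) (div_nonneg hχ₀.le (by linarith))
    _ ≤ (χ₀ / (2 * c)) * B p := by
        apply mul_le_mul_of_nonneg_left _ (div_nonneg hχ₀.le (by linarith))
        simp only [hB]
        nlinarith [abs_nonneg (Chat (ω p)), abs_nonneg (Shat (ω p))]
  -- continuity in p
  have hphase : ∀ φ T : ℝ, ContinuousOn (fun p => p * φ - χ₀ * T / (2 * p)) (Ioi a) := by
    intro φ T
    apply ContinuousOn.sub (Continuous.continuousOn (by fun_prop))
    apply ContinuousOn.div continuousOn_const (Continuous.continuousOn (by fun_prop))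
    intro p hp
    have : (0:ℝ) < p := lt_trans ha_pos hp
    exact ne_of_gt (by linarith)
  have hpdiv : Continuous fun p => p / ω p :=
    continuous_id.div hω_cont fun p => (hω_pos p).ne'
  have hf_cont : ∀ φ T : ℝ, ContinuousOn (fun p => f p φ T) (Ioi a) := by
    intro φ T
    apply ContinuousOn.mul hpdiv.continuousOn
    exact ((Real.continuous_cos.comp_continuousOn (hphase φ T)).mul (hChat.comp hω_cont).continuousOn).add
      ((Real.continuous_sin.comp_continuousOn (hphase φ T)).mul (hShat.comp hω_cont).continuousOn)
  have hg_cont : ∀ φ T : ℝ, ContinuousOn (fun p => g p φ T) (Ioi a) := by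
    intro φ T
    apply ContinuousOn.mul
    · exact (continuous_const.div (continuous_const.mul hω_cont)
        fun p => ne_of_gt (by show (0:ℝ) < 2 * ω p; linarith [hω_pos p])).continuousOn
    · exact ((Real.continuous_sin.comp_continuousOn (hphase φ T)).mul (hChat.comp hω_cont).continuousOn).sub
        ((Real.continuous_cos.comp_continuousOn (hphase φ T)).mul (hShat.comp hω_cont).continuousOn)
  have hf_meas : ∀ φ T : ℝ, AEStronglyMeasurable (fun p => f p φ T)
      (volume.restrict (Ioi a)) := fun φ T =>
    (hf_cont φ T).aestronglyMeasurable measurableSet_Ioi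
  have hg_meas : ∀ φ T : ℝ, AEStronglyMeasurable (fun p => g p φ T)
      (volume.restrict (Ioi a)) := fun φ T =>
    (hg_cont φ T).aestronglyMeasurable measurableSet_Ioi
  -- part 1 : integrability
  have hf_int : ∀ φ T : ℝ, IntegrableOn (fun p => f p φ T) (Ioi a) := by
    intro φ T
    apply Integrable.mono' hB_int (hf_meas φ T)
    exact (ae_restrict_iff' measurableSet_Ioi).2 (Filter.Eventually.of_forall fun p hp => by
      rw [Real.norm_eq_abs]; exact hfB p hp φ T)
  -- pointwise derivatives
  have hderiv_T : ∀ p : ℝ, p ≠ 0 → ∀ φ T : ℝ,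
      HasDerivAt (fun T' => f p φ T') (g p φ T) T := by
    intro p hp φ T
    have hu : HasDerivAt (fun T' : ℝ => p * φ - χ₀ * T' / (2 * p)) (-(χ₀ / (2 * p))) T := by
      simpa using (((hasDerivAt_id T).const_mul χ₀).div_const (2 * p)).const_sub (p * φ)
    have h := ((hu.cos.mul_const (Chat (ω p))).add (hu.sin.mul_const (Shat (ω p)))).const_mul
      (p / ω p)
    refine h.congr_deriv ?_
    simp only [hg]
    have hωp := (hω_pos p).ne'
    field_simp
    ring_nf
  have hderiv_φ : ∀ p : ℝ, p ≠ 0 → ∀ T φ : ℝ,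
      HasDerivAt (fun φ' => g p φ' T) ((χ₀ / 2) * f p φ T) φ := by
    intro p hp T φ
    have hu : HasDerivAt (fun φ' : ℝ => p * φ' - χ₀ * T / (2 * p)) p φ := by
      simpa using ((hasDerivAt_id φ).const_mul p).sub_const (χ₀ * T / (2 * p))
    have h := ((hu.sin.mul_const (Chat (ω p))).sub (hu.cos.mul_const (Shat (ω p)))).const_mul
      (χ₀ / (2 * ω p))
    refine h.congr_deriv ?_
    simp only [hf]
    have hωp := (hω_pos p).ne'
    field_simp
    ring_nf
    try exact Or.inl trivial
  have hne : ∀ᵐ p ∂(volume.restrict (Ioi a)), p ∈ Ioi a :=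
    (ae_restrict_iff' measurableSet_Ioi).2 (Filter.Eventually.of_forall fun p hp => hp)
  -- derivative in T under the integral
  have hT : ∀ φ T : ℝ, Integrable (fun p => g p φ T) (volume.restrict (Ioi a)) ∧
      HasDerivAt (fun T' => ∫ p in Ioi a, f p φ T') (∫ p in Ioi a, g p φ T) T := by
    intro φ T
    refine hasDerivAt_integral_of_dominated_loc_of_deriv_le
      (μ := volume.restrict (Ioi a)) (F := fun T' p => f p φ T') (F' := fun T' p => g p φ T')
      (bound := fun p => χ₀ / (2 * c) * B p) (Metric.ball_mem_nhds _ one_pos)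
      (Filter.Eventually.of_forall fun T' => hf_meas φ T') (hf_int φ T) (hg_meas φ T)
      ?_ (hB_int.const_mul (χ₀ / (2 * c))) ?_
    · exact hne.mono fun p hp x _ => by rw [Real.norm_eq_abs]; exact hgB p hp φ x
    · exact hne.mono fun p hp x _ => hderiv_T p (lt_trans ha_pos hp).ne' φ x
  have hUT : ∀ φ T : ℝ, HasDerivAt (fun T' => U φ T')
      ((1 / Real.pi) * ∫ p in Ioi a, g p φ T) T := by
    intro φ T
    have heq : (fun T' => U φ T') = fun T' => (1 / Real.pi) * ∫ p in Ioi a, f p φ T' :=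
      funext fun T' => hU φ T'
    rw [heq]
    exact ((hT φ T).2).const_mul (1 / Real.pi)
  have hderivT : ∀ φ T : ℝ, deriv (fun T' => U φ T') T
      = (1 / Real.pi) * ∫ p in Ioi a, g p φ T := fun φ T => (hUT φ T).deriv
  -- derivative in φ of the above
  have hφ : ∀ T φ : ℝ, HasDerivAt (fun φ' => ∫ p in Ioi a, g p φ' T)
      ((χ₀ / 2) * ∫ p in Ioi a, f p φ T) φ := by
    intro T φ
    have h := hasDerivAt_integral_of_dominated_loc_of_deriv_le
      (μ := volume.restrict (Ioi a))
      (F := fun φ' p => g p φ' T) (F' := fun φ' p => (χ₀ / 2) * f p φ' T)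
      (bound := fun p => (χ₀ / 2) * B p) (Metric.ball_mem_nhds _ one_pos)
      (Filter.Eventually.of_forall fun φ' => hg_meas φ' T) ((hT φ T).1)
      ((hf_meas φ T).const_mul _)
      (hne.mono fun p hp x _ => by
        rw [Real.norm_eq_abs, abs_mul, abs_of_nonneg (by positivity : (0:ℝ) ≤ χ₀ / 2)]
        exact mul_le_mul_of_nonneg_left (hfB p hp x T) (by positivity))
      (hB_int.const_mul (χ₀ / 2))
      (hne.mono fun p hp x _ => hderiv_φ p (lt_trans ha_pos hp).ne' T x)
    have := h.2
    rwa [integral_const_mul] at this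
  have hUφ : ∀ T φ : ℝ, HasDerivAt (fun φ' => deriv (fun T' => U φ' T') T)
      ((χ₀ / 2) * U φ T) φ := by
    intro T φ
    have heq : (fun φ' => deriv (fun T' => U φ' T') T)
        = fun φ' => (1 / Real.pi) * ∫ p in Ioi a, g p φ' T :=
      funext fun φ' => hderivT φ' T
    rw [heq]
    have := (hφ T φ).const_mul (1 / Real.pi)
    refine this.congr_deriv ?_
    rw [hU φ T]
    ring
  have hderivφ : ∀ T φ : ℝ, deriv (fun φ' => deriv (fun T' => U φ' T') T) φ
      = (χ₀ / 2) * U φ T := fun T φ => (hUφ T φ).deriv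
  -- joint continuity of U
  have hUcont : Continuous fun q : ℝ × ℝ => U q.1 q.2 := by
    have heq : (fun q : ℝ × ℝ => U q.1 q.2)
        = fun q => (1 / Real.pi) * ∫ p in Ioi a, f p q.1 q.2 :=
      funext fun q => hU q.1 q.2
    rw [heq]
    apply continuous_const.mul
    apply continuous_of_dominated (F := fun (q : ℝ × ℝ) (p : ℝ) => f p q.1 q.2) (bound := B)
      (fun q => hf_meas q.1 q.2) (fun q => hne.mono fun p hp => by
        rw [Real.norm_eq_abs]; exact hfB p hp q.1 q.2) hB_int
    apply hne.mono
    intro p hp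
    have hp0 : (0:ℝ) < p := lt_trans ha_pos hp
    have hp0' : p ≠ 0 := hp0.ne'
    simp only [hf]
    apply continuous_const.mul
    apply Continuous.add
    · exact (Real.continuous_cos.comp (by fun_prop)).mul continuous_const
    · exact (Real.continuous_sin.comp (by fun_prop)).mul continuous_const
  refine ⟨hf_int, fun φ T => (hUT φ T).differentiableAt,
    fun T φ => (hUφ T φ).differentiableAt, ?_, fun φ T => ?_⟩
  · have heq : (fun q : ℝ × ℝ => deriv (fun φ' => deriv (fun T' => U φ' T') q.2) q.1)
        = fun q : ℝ × ℝ => (χ₀ / 2) * U q.1 q.2 :=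
      funext fun q => hderivφ q.2 q.1
    rw [heq]
    exact continuous_const.mul hUcont
  · rw [hderivφ T φ]; ring
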